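/- Let initial data ρ_{o,j} ∈ L¹(ℝ; [0,1]) for j = 1,…,M, and assume the CFL condition λ·𝒱 ≤ 1/2. Then the Godunov scheme with operator splitting preserves the total L¹-mass: for every n ≥ 0, Σ_{j=1}^M Σ_{k∈ℤ} Δx·ρ^n_{j,k} = Σ_{j=1}^M ‖ρ_{o,j}‖_{L¹(ℝ)}. -/

import Mathlib

open scoped BigOperators ENNReal
open MeasureTheory

noncomputable def src (M : ℕ) (v : ℕ → ℝ → ℝ) (j : ℕ) (u w U W : ℝ) : ℝ :=
  if 1 ≤ j ∧ j + 1 ≤ M then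
    max (v (j + 1) W - v j U) 0 * u * (1 - w)
      - max (-(v (j + 1) W - v j U)) 0 * w * (1 - u)
  else 0

noncomputable def numFlux (v : ℕ → ℝ → ℝ) (θ : ℕ → ℝ) (j : ℕ) (u w : ℝ) : ℝ :=
  min (min u (θ j) * v j (min u (θ j))) (max w (θ j) * v j (max w (θ j)))

noncomputable def gam (dx : ℝ) (w : ℝ → ℝ) (h : ℤ) : ℝ :=
  ∫ y in ((h : ℝ) * dx)..(((h : ℝ) + 1) * dx), w y

noncomputable def Hset (dx : ℝ) (w : ℝ → ℝ) : Finset ℤ :=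
  Finset.Icc ⌊sInf (tsupport w) / dx⌋ (⌊sSup (tsupport w) / dx⌋ - 1)

noncomputable def dconv (dx : ℝ) (w : ℝ → ℝ) (r : ℤ → ℝ) (k : ℤ) : ℝ :=
  ∑ h ∈ Hset dx w, gam dx w h * r (k + h + 1)

lemma src_zero (M : ℕ) (v : ℕ → ℝ → ℝ) (u w U W : ℝ) :
    src M v 0 u w U W = 0 := by simp [src]

lemma src_top (M : ℕ) (v : ℕ → ℝ → ℝ) (u w U W : ℝ) :
    src M v M u w U W = 0 := by
  unfold src; rw [if_neg (by omega)]

lemma src_bounds (M : ℕ) (v : ℕ → ℝ → ℝ) (Vmax : ℝ) (j : ℕ) (hV0 : 0 ≤ Vmax)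
    (hB : ∀ i, 1 ≤ i → i ≤ M → ∀ x ∈ Set.Icc (0:ℝ) 1, 0 ≤ v i x ∧ v i x ≤ Vmax)
    {u w U W : ℝ} (hu : u ∈ Set.Icc (0:ℝ) 1) (hw : w ∈ Set.Icc (0:ℝ) 1)
    (hU : U ∈ Set.Icc (0:ℝ) 1) (hW : W ∈ Set.Icc (0:ℝ) 1) :
    -(Vmax * (w * (1 - u))) ≤ src M v j u w U W ∧
      src M v j u w U W ≤ Vmax * (u * (1 - w)) := by
  have hw1 : 0 ≤ w * (1 - u) := mul_nonneg hw.1 (by linarith [hu.2])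
  have hu1 : 0 ≤ u * (1 - w) := mul_nonneg hu.1 (by linarith [hw.2])
  unfold src
  split_ifs with h
  · obtain ⟨h1, h2⟩ := h
    obtain ⟨hj0, hjV⟩ := hB j h1 (by omega) U hU
    obtain ⟨hj10, hj1V⟩ := hB (j+1) (by omega) (by exact_mod_cast h2) W hW
    set d := v (j+1) W - v j U with hd
    have hA0 : 0 ≤ max d 0 := le_max_right _ _
    have hAle : max d 0 ≤ Vmax := max_le (by simp [hd]; linarith) hV0
    have hB0 : 0 ≤ max (-d) 0 := le_max_right _ _
    have hBle : max (-d) 0 ≤ Vmax := max_le (by simp [hd]; linarith) hV0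
    have e1 : max d 0 * u * (1 - w) = max d 0 * (u * (1 - w)) := by ring
    have e2 : max (-d) 0 * w * (1 - u) = max (-d) 0 * (w * (1 - u)) := by ring
    have p1 : 0 ≤ max d 0 * (u * (1 - w)) := mul_nonneg hA0 hu1
    have p2 : 0 ≤ max (-d) 0 * (w * (1 - u)) := mul_nonneg hB0 hw1
    have q1 : max d 0 * (u * (1 - w)) ≤ Vmax * (u * (1 - w)) :=
      mul_le_mul_of_nonneg_right hAle hu1
    have q2 : max (-d) 0 * (w * (1 - u)) ≤ Vmax * (w * (1 - u)) :=
      mul_le_mul_of_nonneg_right hBle hw1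
    constructor <;> [rw [e1, e2]; rw [e1, e2]] <;> linarith
  · constructor
    · have : 0 ≤ Vmax * (w * (1 - u)) := mul_nonneg hV0 hw1
      linarith
    · exact mul_nonneg hV0 hu1

lemma gam_nonneg (dx : ℝ) (hdx : 0 < dx) (w : ℝ → ℝ) (hw : ∀ x, 0 ≤ w x) (h : ℤ) :
    0 ≤ gam dx w h := by
  apply intervalIntegral.integral_nonneg (by nlinarith) (fun u _ => hw u)

lemma telescope_sum (T : ℕ → ℝ) (N : ℕ) :
    ∑ j ∈ Finset.Icc 1 N, (T (j-1) - T j) = T 0 - T N := by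
  induction N with
  | zero => simp
  | succ N ihN =>
      rw [Finset.sum_Icc_succ_top (by omega), ihN]
      simp only [Nat.add_sub_cancel]
      ring

lemma gam_sum (dx : ℝ) (hdx : 0 < dx) (w : ℝ → ℝ) (hw_intg : Integrable w) (a : ℤ) :
    ∀ n : ℕ, ∑ h ∈ Finset.Icc a (a - 1 + n), gam dx w h
      = ∫ y in ((a:ℝ) * dx)..(((a:ℝ) + n) * dx), w y := by
  intro n
  induction n with
  | zero =>
      have : Finset.Icc a (a - 1 + (0:ℕ)) = ∅ := by
        apply Finset.Icc_eq_empty; omega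
      rw [this]
      push_cast
      rw [show ((a:ℝ) + 0) * dx = (a:ℝ) * dx by ring, intervalIntegral.integral_same,
        Finset.sum_empty]
  | succ n ih =>
      have hins : Finset.Icc a (a - 1 + (n+1:ℕ)) = insert (a + n) (Finset.Icc a (a - 1 + n)) := by
        ext x; simp only [Finset.mem_Icc, Finset.mem_insert]; omega
      rw [hins, Finset.sum_insert (by simp only [Finset.mem_Icc]; omega), ih, add_comm]
      have h1 : IntervalIntegrable w volume ((a:ℝ)*dx) (((a:ℝ)+n)*dx) :=
        hw_intg.intervalIntegrable
      have h2 : IntervalIntegrable w volume (((a:ℝ)+n)*dx) (((a:ℝ)+n+1)*dx) :=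
        hw_intg.intervalIntegrable
      have hadd := intervalIntegral.integral_add_adjacent_intervals h1 h2
      have e1 : gam dx w (a + n) = ∫ y in (((a:ℝ)+n)*dx)..(((a:ℝ)+n+1)*dx), w y := by
        unfold gam; push_cast; ring_nf
      rw [e1, hadd]
      push_cast
      ring_nf

lemma gam_sum_le (dx : ℝ) (hdx : 0 < dx) (w : ℝ → ℝ)
    (hw_nonneg : ∀ x, 0 ≤ w x) (hw_intg : Integrable w) (hw_int : ∫ x, w x = 1)
    (a b : ℤ) : ∑ h ∈ Finset.Icc a b, gam dx w h ≤ 1 := by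
  rcases le_or_gt a b with hab | hab
  · set n : ℕ := (b - a + 1).toNat with hn
    have hbn : b = a - 1 + n := by simp [hn]; omega
    rw [hbn, gam_sum dx hdx w hw_intg a n]
    have hle : (a:ℝ) * dx ≤ ((a:ℝ) + n) * dx := by
      have : (a:ℝ) ≤ (a:ℝ) + n := by linarith [Nat.cast_nonneg (α := ℝ) n]
      nlinarith
    rw [intervalIntegral.integral_of_le hle, ← hw_int]
    exact setIntegral_le_integral hw_intg (Filter.Eventually.of_forall hw_nonneg)
  · rw [Finset.Icc_eq_empty (by omega), Finset.sum_empty]; norm_num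

lemma dconv_mem (dx ν : ℝ) (hdx : 0 < dx) (w : ℝ → ℝ)
    (hw_nonneg : ∀ x, 0 ≤ w x) (hw_intg : Integrable w) (hw_int : ∫ x, w x = 1)
    (r : ℤ → ℝ) (hr : ∀ k, r k ∈ Set.Icc (0:ℝ) 1) (k : ℤ) :
    dconv dx w r k ∈ Set.Icc (0:ℝ) 1 := by
  constructor
  · exact Finset.sum_nonneg fun h _ =>
      mul_nonneg (gam_nonneg dx hdx w hw_nonneg h) (hr _).1
  · calc ∑ h ∈ Hset dx w, gam dx w h * r (k + h + 1)
        ≤ ∑ h ∈ Hset dx w, gam dx w h := Finset.sum_le_sum fun h _ =>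
          mul_le_of_le_one_right (gam_nonneg dx hdx w hw_nonneg h) (hr _).2
      _ ≤ 1 := gam_sum_le dx hdx w hw_nonneg hw_intg hw_int _ _
set_option maxHeartbeats 1600000 in
theorem scheme_mass_conservation
    (M : ℕ) (hM : 2 ≤ M)
    (v : ℕ → ℝ → ℝ) (θ : ℕ → ℝ)
    (dx dt ν Vmax V'max : ℝ)
    (w : ℝ → ℝ)
    (ρ₀ : ℕ → ℝ → ℝ) (ρ ρh : ℕ → ℕ → ℤ → ℝ)
    (hdx : dx ∈ Set.Ioo (0 : ℝ) 1) (hdt : 0 < dt) (hν : 0 < ν)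
    (hw_cont : ContinuousOn w (Set.Icc (-ν) ν))
    (hw_nonneg : ∀ x, 0 ≤ w x)
    (hw_supp : Function.support w ⊆ Set.Icc (-ν) ν)
    (hw_int : ∫ x, w x = 1)
    (hv_anti : ∀ j ∈ Finset.Icc 1 M, StrictAntiOn (v j) (Set.Icc (0 : ℝ) 1))
    (hv_nonneg : ∀ j ∈ Finset.Icc 1 M, ∀ x ∈ Set.Icc (0 : ℝ) 1, 0 ≤ v j x)
    (hv_one : ∀ j ∈ Finset.Icc 1 M, v j 1 = 0)
    (hVmax : ∀ j ∈ Finset.Icc 1 M, ∀ x ∈ Set.Icc (0 : ℝ) 1, |v j x| ≤ Vmax)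
    (hV'nonneg : 0 ≤ V'max)
    (hLip : ∀ j ∈ Finset.Icc 1 M,
      LipschitzOnWith (Real.toNNReal V'max) (v j) (Set.Icc (0 : ℝ) 1))
    (hθmem : ∀ j ∈ Finset.Icc 1 M, θ j ∈ Set.Icc (0 : ℝ) 1)
    (hθmax : ∀ j ∈ Finset.Icc 1 M, ∀ u ∈ Set.Icc (0 : ℝ) 1,
      u * v j u ≤ θ j * v j (θ j))
    (hθuniq : ∀ j ∈ Finset.Icc 1 M, ∀ u ∈ Set.Icc (0 : ℝ) 1,
      u * v j u = θ j * v j (θ j) → u = θ j)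
    (hCFL : dt / dx * (Vmax + V'max) ≤ 1 / 2)
    (hρ₀mem : ∀ j ∈ Finset.Icc 1 M, ∀ x, ρ₀ j x ∈ Set.Icc (0 : ℝ) 1)
    (hInt : ∀ j ∈ Finset.Icc 1 M, Integrable (ρ₀ j))
    (hinit : ∀ j ∈ Finset.Icc 1 M, ∀ k : ℤ,
      ρ 0 j k = (∫ x in ((k : ℝ) * dx)..(((k : ℝ) + 1) * dx), ρ₀ j x) / dx)
    (hconv : ∀ n : ℕ, ∀ j ∈ Finset.Icc 1 M, ∀ k : ℤ,
      ρh n j k = ρ n j k - dt / dx *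
        (numFlux v θ j (ρ n j k) (ρ n j (k + 1))
          - numFlux v θ j (ρ n j (k - 1)) (ρ n j k)))
    (hrelax : ∀ n : ℕ, ∀ j ∈ Finset.Icc 1 M, ∀ k : ℤ,
      ρ (n + 1) j k = ρh n j k
        + dt * src M v (j - 1) (ρh n (j - 1) k) (ρh n j k)
            (dconv dx w (ρh n (j - 1)) k) (dconv dx w (ρh n j) k)
        - dt * src M v j (ρh n j k) (ρh n (j + 1) k)
            (dconv dx w (ρh n j) k) (dconv dx w (ρh n (j + 1)) k))
    :
    ∀ n : ℕ,
      (∑ j ∈ Finset.Icc 1 M, ∑' k : ℤ, ENNReal.ofReal (dx * ρ n j k))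
        = ∑ j ∈ Finset.Icc 1 M, ∫⁻ x : ℝ, ENNReal.ofReal (ρ₀ j x) := by
  obtain ⟨hdx0, hdx1⟩ := hdx
  have h1M : 1 ∈ Finset.Icc 1 M := by simp only [Finset.mem_Icc]; omega
  have hVmax0 : 0 ≤ Vmax :=
    le_trans (abs_nonneg _) (hVmax 1 h1M 1 ⟨by norm_num, le_refl 1⟩)
  have hvle : ∀ j ∈ Finset.Icc 1 M, ∀ x ∈ Set.Icc (0:ℝ) 1, v j x ≤ Vmax :=
    fun j hj x hx => (abs_le.mp (hVmax j hj x hx)).2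
  have hvB : ∀ i, 1 ≤ i → i ≤ M → ∀ x ∈ Set.Icc (0:ℝ) 1, 0 ≤ v i x ∧ v i x ≤ Vmax := by
    intro i h1 h2 x hx
    have hi : i ∈ Finset.Icc 1 M := Finset.mem_Icc.mpr ⟨h1, h2⟩
    exact ⟨hv_nonneg i hi x hx, hvle i hi x hx⟩
  have hlin : ∀ j ∈ Finset.Icc 1 M, ∀ x ∈ Set.Icc (0:ℝ) 1, v j x ≤ V'max * (1 - x) := by
    intro j hj x hx
    have hd := (hLip j hj).dist_le_mul x hx 1 ⟨by norm_num, le_refl 1⟩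
    rw [Real.dist_eq, Real.dist_eq, Real.coe_toNNReal _ hV'nonneg] at hd
    have h1 := hv_one j hj
    have hx1 : |x - 1| = 1 - x := by
      rw [abs_of_nonpos (by linarith [hx.2])]; ring
    calc v j x = v j x - v j 1 := by rw [h1]; ring
      _ ≤ |v j x - v j 1| := le_abs_self _
      _ ≤ V'max * (1 - x) := by rw [← hx1]; exact hd
  have hlam0 : 0 < dt / dx := div_pos hdt hdx0
  have hlamV : dt / dx * Vmax ≤ 1/2 := by nlinarith
  have hlamV' : dt / dx * V'max ≤ 1/2 := by nlinarith
  have hdtV : 2 * (dt * Vmax) ≤ dx := by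
    have h := mul_le_mul_of_nonneg_right hlamV hdx0.le
    have e : dt / dx * Vmax * dx = dt * Vmax := by field_simp
    rw [e] at h; linarith
  have hcell : ∀ c : ℝ, c * dx ≤ (c + 1) * dx := by
    intro c; nlinarith
  -- numFlux bounds
  have hF : ∀ j ∈ Finset.Icc 1 M, ∀ u ∈ Set.Icc (0:ℝ) 1, ∀ z ∈ Set.Icc (0:ℝ) 1,
      0 ≤ numFlux v θ j u z ∧ numFlux v θ j u z ≤ Vmax * u ∧
        numFlux v θ j u z ≤ V'max * (1 - z) := by
    intro j hj u hu z hz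
    have hθj := hθmem j hj
    set a := min u (θ j) with ha
    set b := max z (θ j) with hb
    have ham : a ∈ Set.Icc (0:ℝ) 1 :=
      ⟨le_min hu.1 hθj.1, le_trans (min_le_left _ _) hu.2⟩
    have hbm : b ∈ Set.Icc (0:ℝ) 1 :=
      ⟨le_trans hθj.1 (le_max_right _ _), max_le hz.2 hθj.2⟩
    have hva := hv_nonneg j hj a ham
    have hvb := hv_nonneg j hj b hbm
    refine ⟨le_min (mul_nonneg ham.1 hva) (mul_nonneg hbm.1 hvb), ?_, ?_⟩
    · calc numFlux v θ j u z ≤ a * v j a := min_le_left _ _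
        _ ≤ u * Vmax := mul_le_mul (min_le_left _ _) (hvle j hj a ham) hva hu.1
        _ = Vmax * u := mul_comm _ _
    · calc numFlux v θ j u z ≤ b * v j b := min_le_right _ _
        _ ≤ v j b := mul_le_of_le_one_left hvb hbm.2
        _ ≤ V'max * (1 - b) := hlin j hj b hbm
        _ ≤ V'max * (1 - z) := by
            have : z ≤ b := le_max_left _ _
            apply mul_le_mul_of_nonneg_left (by linarith) hV'nonneg
  -- integrability of kernel
  have hw_intg : Integrable w := by
    have h1 : IntegrableOn w (Set.Icc (-ν) ν) := hw_cont.integrableOn_Icc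
    have h2 := h1.integrable_indicator measurableSet_Icc
    rwa [Set.indicator_eq_self.mpr hw_supp] at h2
  have hdc : ∀ (r : ℤ → ℝ), (∀ k, r k ∈ Set.Icc (0:ℝ) 1) → ∀ k,
      dconv dx w r k ∈ Set.Icc (0:ℝ) 1 :=
    fun r hr k => dconv_mem dx ν hdx0 w hw_nonneg hw_intg hw_int r hr k
  -- the main invariant
  have key : ∀ n : ℕ,
      (∀ j ∈ Finset.Icc 1 M, (∀ k, ρ n j k ∈ Set.Icc (0:ℝ) 1) ∧ Summable (ρ n j)) ∧
      (∑ j ∈ Finset.Icc 1 M, ∑' k : ℤ, ρ n j k)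
        = ∑ j ∈ Finset.Icc 1 M, (∫ x, ρ₀ j x) / dx := by
    intro n
    induction n with
    | zero =>
        -- partition of ℝ into cells
        have hdisj : Pairwise (Function.onFun Disjoint fun k : ℤ =>
            Set.Ioc ((k:ℝ)*dx) (((k:ℝ)+1)*dx)) := by
          have hwlog : ∀ k l : ℤ, k < l → Disjoint (Set.Ioc ((k:ℝ)*dx) (((k:ℝ)+1)*dx))
              (Set.Ioc ((l:ℝ)*dx) (((l:ℝ)+1)*dx)) := by
            intro k l hkl
            refine Set.disjoint_left.mpr ?_
            rintro x ⟨h1, h2⟩ ⟨h3, h4⟩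
            have hc : ((k:ℝ)+1) ≤ (l:ℝ) := by exact_mod_cast (by omega : k+1 ≤ l)
            have : ((k:ℝ)+1)*dx ≤ (l:ℝ)*dx := mul_le_mul_of_nonneg_right hc hdx0.le
            linarith
          intro k l hkl
          rcases lt_or_gt_of_ne hkl with h | h
          · exact hwlog k l h
          · exact (hwlog l k h).symm
        have hUnion : (⋃ k : ℤ, Set.Ioc ((k:ℝ)*dx) (((k:ℝ)+1)*dx)) = Set.univ := by
          ext x
          simp only [Set.mem_iUnion, Set.mem_univ, iff_true, Set.mem_Ioc]
          refine ⟨⌈x/dx⌉ - 1, ?_, ?_⟩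
          · push_cast
            have h1 : ((⌈x/dx⌉:ℝ) - 1) < x/dx := by
              have := Int.ceil_lt_add_one (x/dx); linarith
            calc ((⌈x/dx⌉:ℝ) - 1) * dx < (x/dx)*dx := mul_lt_mul_of_pos_right h1 hdx0
              _ = x := by field_simp
          · push_cast
            have h1 : x/dx ≤ ((⌈x/dx⌉:ℝ) - 1) + 1 := by
              have := Int.le_ceil (x/dx); linarith
            calc x = (x/dx)*dx := by field_simp
              _ ≤ (((⌈x/dx⌉:ℝ) - 1) + 1)*dx := mul_le_mul_of_nonneg_right h1 hdx0.le
        have hsum0 : ∀ j ∈ Finset.Icc 1 M,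
            HasSum (fun k : ℤ => ρ 0 j k) ((∫ x, ρ₀ j x) / dx) := by
          intro j hj
          have hint := hInt j hj
          have H := MeasureTheory.hasSum_integral_iUnion (μ := volume) (f := ρ₀ j)
            (s := fun k : ℤ => Set.Ioc ((k:ℝ)*dx) (((k:ℝ)+1)*dx))
            (fun _ => measurableSet_Ioc) hdisj (by rw [hUnion]; exact hint.integrableOn)
          rw [hUnion, MeasureTheory.setIntegral_univ] at H
          have H2 := H.div_const dx
          have heq : (fun k : ℤ => ρ 0 j k)
              = fun k : ℤ => (∫ x in Set.Ioc ((k:ℝ)*dx) (((k:ℝ)+1)*dx), ρ₀ j x) / dx := by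
            funext k
            rw [hinit j hj k, intervalIntegral.integral_of_le (hcell (k:ℝ))]
          rw [heq]
          exact H2
        refine ⟨?_, ?_⟩
        · intro j hj
          refine ⟨?_, (hsum0 j hj).summable⟩
          intro k
          rw [hinit j hj k]
          constructor
          · apply div_nonneg _ hdx0.le
            exact intervalIntegral.integral_nonneg (hcell (k:ℝ))
              (fun x _ => (hρ₀mem j hj x).1)
          · rw [div_le_one hdx0]
            calc (∫ x in ((k:ℝ)*dx)..(((k:ℝ)+1)*dx), ρ₀ j x)
                ≤ ∫ _ in ((k:ℝ)*dx)..(((k:ℝ)+1)*dx), (1:ℝ) := by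
                  apply intervalIntegral.integral_mono_on (hcell (k:ℝ))
                    ((hInt j hj).intervalIntegrable) intervalIntegrable_const
                    (fun x _ => (hρ₀mem j hj x).2)
              _ = dx := by
                  rw [intervalIntegral.integral_const]; simp; ring
        · refine Finset.sum_congr rfl ?_
          intro j hj
          exact (hsum0 j hj).tsum_eq
    | succ n ih =>
        obtain ⟨ihb, ihm⟩ := ih
        -- convective step
        have hGs : ∀ j ∈ Finset.Icc 1 M,
            Summable (fun k : ℤ => numFlux v θ j (ρ n j k) (ρ n j (k+1))) := by
          intro j hj
          apply Summable.of_nonneg_of_le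
            (fun k => (hF j hj _ ((ihb j hj).1 k) _ ((ihb j hj).1 (k+1))).1)
            (fun k => (hF j hj _ ((ihb j hj).1 k) _ ((ihb j hj).1 (k+1))).2.1)
            ((ihb j hj).2.mul_left Vmax)
        have hGss : ∀ j ∈ Finset.Icc 1 M,
            Summable (fun k : ℤ => numFlux v θ j (ρ n j (k-1)) (ρ n j k)) := by
          intro j hj
          have h := ((Equiv.subRight (1:ℤ)).summable_iff).mpr (hGs j hj)
          apply h.congr
          intro k
          simp only [Function.comp_apply, Equiv.subRight_apply]
          rw [show k - 1 + 1 = k by ring]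
        have hρhb : ∀ j ∈ Finset.Icc 1 M, ∀ k, ρh n j k ∈ Set.Icc (0:ℝ) 1 := by
          intro j hj k
          have hbk := (ihb j hj).1 k
          have hbk1 := (ihb j hj).1 (k+1)
          have hbkm := (ihb j hj).1 (k-1)
          obtain ⟨hf1, hf2, _⟩ := hF j hj _ hbk _ hbk1
          obtain ⟨hg1, _, hg3⟩ := hF j hj _ hbkm _ hbk
          rw [hconv n j hj k]
          have h1 : dt/dx * numFlux v θ j (ρ n j k) (ρ n j (k+1))
              ≤ dt/dx * (Vmax * ρ n j k) := mul_le_mul_of_nonneg_left hf2 hlam0.le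
          have h2 : dt/dx * Vmax * ρ n j k ≤ 1/2 * ρ n j k :=
            mul_le_mul_of_nonneg_right hlamV hbk.1
          have h3 : 0 ≤ dt/dx * numFlux v θ j (ρ n j (k-1)) (ρ n j k) :=
            mul_nonneg hlam0.le hg1
          have h4 : dt/dx * numFlux v θ j (ρ n j (k-1)) (ρ n j k)
              ≤ dt/dx * (V'max * (1 - ρ n j k)) := mul_le_mul_of_nonneg_left hg3 hlam0.le
          have h5 : dt/dx * V'max * (1 - ρ n j k) ≤ 1/2 * (1 - ρ n j k) :=
            mul_le_mul_of_nonneg_right hlamV' (by linarith [hbk.2])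
          have h6 : 0 ≤ dt/dx * numFlux v θ j (ρ n j k) (ρ n j (k+1)) :=
            mul_nonneg hlam0.le hf1
          constructor
          · linarith [h1, h2, h3, hbk.1]
          · linarith [h6, h4, h5, hbk.2]
        have hρheq : ∀ j ∈ Finset.Icc 1 M, (fun k : ℤ => ρh n j k)
            = fun k : ℤ => ρ n j k - dt/dx * (numFlux v θ j (ρ n j k) (ρ n j (k+1))
                - numFlux v θ j (ρ n j (k-1)) (ρ n j k)) := by
          intro j hj; funext k; exact hconv n j hj k
        have hρhs : ∀ j ∈ Finset.Icc 1 M, Summable (ρh n j) := by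
          intro j hj
          have h := ((ihb j hj).2.sub (((hGs j hj).sub (hGss j hj)).mul_left (dt/dx)))
          exact h.congr (fun k => (congrFun (hρheq j hj) k).symm)
        have hρhm : ∀ j ∈ Finset.Icc 1 M, ∑' k : ℤ, ρh n j k = ∑' k : ℤ, ρ n j k := by
          intro j hj
          have hshift : (∑' k : ℤ, numFlux v θ j (ρ n j (k-1)) (ρ n j k))
              = ∑' k : ℤ, numFlux v θ j (ρ n j k) (ρ n j (k+1)) := by
            have h := (Equiv.subRight (1:ℤ)).tsum_eq
              (fun k : ℤ => numFlux v θ j (ρ n j k) (ρ n j (k+1)))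
            rw [← h]
            apply tsum_congr
            intro k
            simp only [Equiv.subRight_apply]
            rw [show k - 1 + 1 = k by ring]
          calc ∑' k : ℤ, ρh n j k
              = ∑' k : ℤ, (ρ n j k - dt/dx * (numFlux v θ j (ρ n j k) (ρ n j (k+1))
                - numFlux v θ j (ρ n j (k-1)) (ρ n j k))) := tsum_congr
                  (fun k => congrFun (hρheq j hj) k)
            _ = ∑' k : ℤ, ρ n j k := by
                rw [Summable.tsum_sub (ihb j hj).2 (((hGs j hj).sub (hGss j hj)).mul_left (dt/dx)),
                  tsum_mul_left, Summable.tsum_sub (hGs j hj) (hGss j hj), hshift, sub_self,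
                  mul_zero, sub_zero]
        -- relaxation step
        set Sf : ℕ → ℤ → ℝ := fun i k => src M v i (ρh n i k) (ρh n (i+1) k)
            (dconv dx w (ρh n i) k) (dconv dx w (ρh n (i+1)) k) with hSf
        have hSf0 : ∀ k, Sf 0 k = 0 := fun k => src_zero M v _ _ _ _
        have hSfM : ∀ k, Sf M k = 0 := fun k => src_top M v _ _ _ _
        have hSfb : ∀ i, 1 ≤ i → i + 1 ≤ M → ∀ k : ℤ,
            -(Vmax * (ρh n (i+1) k * (1 - ρh n i k))) ≤ Sf i k ∧
              Sf i k ≤ Vmax * (ρh n i k * (1 - ρh n (i+1) k)) := by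
          intro i h1 h2 k
          have hi : i ∈ Finset.Icc 1 M := Finset.mem_Icc.mpr ⟨h1, by omega⟩
          have hi1 : i+1 ∈ Finset.Icc 1 M := Finset.mem_Icc.mpr ⟨by omega, h2⟩
          exact src_bounds M v Vmax i hVmax0 hvB (hρhb i hi k) (hρhb (i+1) hi1 k)
            (hdc _ (hρhb i hi) k) (hdc _ (hρhb (i+1) hi1) k)
        have hSfs : ∀ i, i ≤ M → Summable (Sf i) := by
          intro i hiM
          rcases Nat.eq_zero_or_pos i with rfl | hi0
          · exact summable_zero.congr (fun k => (hSf0 k).symm)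
          rcases eq_or_lt_of_le hiM with rfl | hiM'
          · exact summable_zero.congr (fun k => (hSfM k).symm)
          have hi : i ∈ Finset.Icc 1 M := Finset.mem_Icc.mpr ⟨hi0, by omega⟩
          have hi1 : i+1 ∈ Finset.Icc 1 M := Finset.mem_Icc.mpr ⟨by omega, by omega⟩
          have hbnd : Summable (fun k : ℤ => Vmax * ρh n i k + Vmax * ρh n (i+1) k) :=
            ((hρhs i hi).mul_left Vmax).add ((hρhs (i+1) hi1).mul_left Vmax)
          apply Summable.of_abs
          apply Summable.of_nonneg_of_le (fun k => abs_nonneg _) _ hbnd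
          intro k
          obtain ⟨hl, hr⟩ := hSfb i hi0 (by omega) k
          have hu := hρhb i hi k
          have hq := hρhb (i+1) hi1 k
          rw [abs_le]
          constructor
          · have e1 : Vmax * (ρh n (i+1) k * (1 - ρh n i k)) ≤ Vmax * ρh n (i+1) k :=
              mul_le_mul_of_nonneg_left
                (mul_le_of_le_one_right hq.1 (by linarith [hu.1])) hVmax0
            have e2 : 0 ≤ Vmax * ρh n i k := mul_nonneg hVmax0 hu.1
            linarith
          · have e1 : Vmax * (ρh n i k * (1 - ρh n (i+1) k)) ≤ Vmax * ρh n i k :=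
              mul_le_mul_of_nonneg_left
                (mul_le_of_le_one_right hu.1 (by linarith [hq.1])) hVmax0
            have e2 : 0 ≤ Vmax * ρh n (i+1) k := mul_nonneg hVmax0 hq.1
            linarith
        have hlane : ∀ j ∈ Finset.Icc 1 M,
            (fun k : ℤ => ρ (n+1) j k)
              = fun k : ℤ => ρh n j k + dt * Sf (j-1) k - dt * Sf j k := by
          intro j hj
          obtain ⟨hj1, hjM⟩ := Finset.mem_Icc.mp hj
          funext k
          rw [hrelax n j hj k]
          have hidx : j - 1 + 1 = j := by omega
          simp only [hSf, hidx]
        -- bounds for s1/s2 per lane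
        have hs1b : ∀ j ∈ Finset.Icc 1 M, ∀ k : ℤ,
            -(Vmax * ρh n j k) ≤ Sf (j-1) k ∧ Sf (j-1) k ≤ Vmax * (1 - ρh n j k) := by
          intro j hj k
          obtain ⟨hj1, hjM⟩ := Finset.mem_Icc.mp hj
          have hu := hρhb j hj k
          rcases eq_or_lt_of_le hj1 with h1 | h1
          · have : j - 1 = 0 := by omega
            rw [this]
            constructor
            · rw [hSf0 k]
              exact neg_nonpos.mpr (mul_nonneg hVmax0 hu.1)
            · rw [hSf0 k]
              exact mul_nonneg hVmax0 (by linarith [hu.2])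
          · have hidx : j - 1 + 1 = j := by omega
            obtain ⟨hl, hr⟩ := hSfb (j-1) (by omega) (by omega) k
            rw [hidx] at hl hr
            have hp := hρhb (j-1) (Finset.mem_Icc.mpr ⟨by omega, by omega⟩) k
            constructor
            · have e1 : Vmax * (ρh n j k * (1 - ρh n (j-1) k)) ≤ Vmax * ρh n j k :=
                mul_le_mul_of_nonneg_left
                  (mul_le_of_le_one_right hu.1 (by linarith [hp.1])) hVmax0
              linarith
            · have e1 : Vmax * (ρh n (j-1) k * (1 - ρh n j k)) ≤ Vmax * (1 - ρh n j k) :=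
                mul_le_mul_of_nonneg_left
                  (mul_le_of_le_one_left (by linarith [hu.2]) hp.2) hVmax0
              linarith
        have hs2b : ∀ j ∈ Finset.Icc 1 M, ∀ k : ℤ,
            -(Vmax * (1 - ρh n j k)) ≤ Sf j k ∧ Sf j k ≤ Vmax * ρh n j k := by
          intro j hj k
          obtain ⟨hj1, hjM⟩ := Finset.mem_Icc.mp hj
          have hu := hρhb j hj k
          rcases eq_or_lt_of_le hjM with h1 | h1
          · subst h1
            constructor
            · rw [hSfM k]
              exact neg_nonpos.mpr (mul_nonneg hVmax0 (by linarith [hu.2]))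
            · rw [hSfM k]
              exact mul_nonneg hVmax0 hu.1
          · obtain ⟨hl, hr⟩ := hSfb j hj1 (by omega) k
            have hq := hρhb (j+1) (Finset.mem_Icc.mpr ⟨by omega, by omega⟩) k
            constructor
            · have e1 : Vmax * (ρh n (j+1) k * (1 - ρh n j k)) ≤ Vmax * (1 - ρh n j k) :=
                mul_le_mul_of_nonneg_left
                  (mul_le_of_le_one_left (by linarith [hu.2]) hq.2) hVmax0
              linarith
            · have e1 : Vmax * (ρh n j k * (1 - ρh n (j+1) k)) ≤ Vmax * ρh n j k :=
                mul_le_mul_of_nonneg_left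
                  (mul_le_of_le_one_right hu.1 (by linarith [hq.1])) hVmax0
              linarith
        have hρb1 : ∀ j ∈ Finset.Icc 1 M, ∀ k, ρ (n+1) j k ∈ Set.Icc (0:ℝ) 1 := by
          intro j hj k
          have hu := hρhb j hj k
          obtain ⟨hs1l, hs1r⟩ := hs1b j hj k
          obtain ⟨hs2l, hs2r⟩ := hs2b j hj k
          have heqk := congrFun (hlane j hj) k
          rw [heqk]
          have p1 : dt * (-(Vmax * ρh n j k)) ≤ dt * Sf (j-1) k :=
            mul_le_mul_of_nonneg_left hs1l hdt.le
          have p2 : dt * Sf j k ≤ dt * (Vmax * ρh n j k) :=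
            mul_le_mul_of_nonneg_left hs2r hdt.le
          have p3 : 0 ≤ ρh n j k * (1 - 2*(dt*Vmax)) :=
            mul_nonneg hu.1 (by linarith)
          have p4 : dt * Sf (j-1) k ≤ dt * (Vmax * (1 - ρh n j k)) :=
            mul_le_mul_of_nonneg_left hs1r hdt.le
          have p5 : dt * (-(Vmax * (1 - ρh n j k))) ≤ dt * Sf j k :=
            mul_le_mul_of_nonneg_left hs2l hdt.le
          have p6 : 0 ≤ (1 - ρh n j k) * (1 - 2*(dt*Vmax)) :=
            mul_nonneg (by linarith [hu.2]) (by linarith)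
          have e1 : ρh n j k * (1 - 2*(dt*Vmax))
              = ρh n j k - dt*(Vmax*ρh n j k) - dt*(Vmax*ρh n j k) := by ring
          have e2 : (1 - ρh n j k) * (1 - 2*(dt*Vmax))
              = (1 - ρh n j k) - dt*(Vmax*(1 - ρh n j k))
                - dt*(Vmax*(1 - ρh n j k)) := by ring
          constructor
          · linarith [p1, p2, p3, e1]
          · linarith [p4, p5, p6, e2, hu.2]
        have hSsum1 : ∀ j ∈ Finset.Icc 1 M, Summable (Sf (j-1)) := by
          intro j hj
          obtain ⟨hj1, hjM⟩ := Finset.mem_Icc.mp hj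
          exact hSfs (j-1) (by omega)
        have hSsum2 : ∀ j ∈ Finset.Icc 1 M, Summable (Sf j) := by
          intro j hj
          obtain ⟨hj1, hjM⟩ := Finset.mem_Icc.mp hj
          exact hSfs j hjM
        have hρs1 : ∀ j ∈ Finset.Icc 1 M, Summable (ρ (n+1) j) := by
          intro j hj
          have h := ((hρhs j hj).add ((hSsum1 j hj).mul_left dt)).sub
            ((hSsum2 j hj).mul_left dt)
          exact h.congr (fun k => (congrFun (hlane j hj) k).symm)
        have hlanem : ∀ j ∈ Finset.Icc 1 M,
            ∑' k : ℤ, ρ (n+1) j k = ∑' k : ℤ, ρ n j k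
              + (dt * (∑' k : ℤ, Sf (j-1) k) - dt * (∑' k : ℤ, Sf j k)) := by
          intro j hj
          calc ∑' k : ℤ, ρ (n+1) j k
              = ∑' k : ℤ, (ρh n j k + dt * Sf (j-1) k - dt * Sf j k) :=
                tsum_congr (fun k => congrFun (hlane j hj) k)
            _ = ∑' k : ℤ, ρ n j k + (dt * (∑' k : ℤ, Sf (j-1) k)
                - dt * (∑' k : ℤ, Sf j k)) := by
                rw [Summable.tsum_sub ((hρhs j hj).add ((hSsum1 j hj).mul_left dt))
                    ((hSsum2 j hj).mul_left dt),
                  Summable.tsum_add (hρhs j hj) ((hSsum1 j hj).mul_left dt),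
                  tsum_mul_left, tsum_mul_left, hρhm j hj]
                ring
        refine ⟨fun j hj => ⟨hρb1 j hj, hρs1 j hj⟩, ?_⟩
        have hT0 : (∑' k : ℤ, Sf 0 k) = 0 := by
          rw [tsum_congr hSf0]; exact tsum_zero
        have hTM : (∑' k : ℤ, Sf M k) = 0 := by
          rw [tsum_congr hSfM]; exact tsum_zero
        have htel := telescope_sum (fun i => dt * (∑' k : ℤ, Sf i k)) M
        calc ∑ j ∈ Finset.Icc 1 M, ∑' k : ℤ, ρ (n+1) j k
            = ∑ j ∈ Finset.Icc 1 M, (∑' k : ℤ, ρ n j k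
              + (dt * (∑' k : ℤ, Sf (j-1) k) - dt * (∑' k : ℤ, Sf j k))) :=
              Finset.sum_congr rfl (fun j hj => hlanem j hj)
          _ = (∑ j ∈ Finset.Icc 1 M, ∑' k : ℤ, ρ n j k)
              + ∑ j ∈ Finset.Icc 1 M, (dt * (∑' k : ℤ, Sf (j-1) k)
                - dt * (∑' k : ℤ, Sf j k)) := Finset.sum_add_distrib
          _ = ∑ j ∈ Finset.Icc 1 M, (∫ x, ρ₀ j x) / dx := by
              rw [htel, hT0, hTM, ihm]
              ring
  intro n
  obtain ⟨hb, hm⟩ := key n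
  have hL : ∀ j ∈ Finset.Icc 1 M, (∑' k : ℤ, ENNReal.ofReal (dx * ρ n j k))
      = ENNReal.ofReal (dx * ∑' k : ℤ, ρ n j k) := by
    intro j hj
    rw [← ENNReal.ofReal_tsum_of_nonneg (fun k => mul_nonneg hdx0.le ((hb j hj).1 k).1)
      ((hb j hj).2.mul_left dx), tsum_mul_left]
  have hR : ∀ j ∈ Finset.Icc 1 M, (∫⁻ x : ℝ, ENNReal.ofReal (ρ₀ j x))
      = ENNReal.ofReal (∫ x, ρ₀ j x) := by
    intro j hj
    exact (MeasureTheory.ofReal_integral_eq_lintegral_ofReal (hInt j hj)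
      (Filter.Eventually.of_forall fun x => (hρ₀mem j hj x).1)).symm
  rw [Finset.sum_congr rfl hL, Finset.sum_congr rfl hR,
    ← ENNReal.ofReal_sum_of_nonneg
      (fun j hj => mul_nonneg hdx0.le (tsum_nonneg fun k => ((hb j hj).1 k).1)),
    ← ENNReal.ofReal_sum_of_nonneg
      (fun j hj => integral_nonneg fun x => (hρ₀mem j hj x).1)]
  congr 1
  rw [← Finset.mul_sum, hm, ← Finset.sum_div]
  field_simp
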